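/- Let (λ_k, x_k, v_k) be generated by the fully implicit scheme with arbitrary step sizes α_k > 0: θ_k(λ_{k+1} − λ_k)/α_k = A v_{k+1} − b; (x_{k+1} − x_k)/α_k = v_{k+1} − x_{k+1}; γ_k(v_{k+1} − v_k)/α_k = μ_β(x_{k+1} − v_{k+1}) − (ξ_{k+1} + Aᵀλ_{k+1}) with ξ_{k+1} ∈ ∂f_β(x_{k+1}) + N_X(x_{k+1}), x₀ ∈ X, v₀ ∈ ℝⁿ, θ_{k+1} = θ_k/(1+α_k), γ_{k+1} = (γ_k + μ_β α_k)/(1+α_k), θ₀ = 1, γ₀ > 0. Set E_k = L_β(x_k, λ*) − L_β(x*, λ_k) + (γ_k/2)‖v_k − x*‖² + (θ_k/2)‖λ_k − λ*‖² and R₀ = √(2E₀) + ‖λ₀ − λ*‖ + ‖Ax₀ − b‖. Then for all k: ‖Ax_k − b‖ ≤ θ_k R₀; 0 ≤ L(x_k, λ*) − L(x*, λ_k) ≤ θ_k E₀; and |f(x_k) − f(x*)| ≤ θ_k (E₀ + R₀‖λ*‖), where θ_k = ∏_{i=0}^{k−1} 1/(1+α_i) and L(x,λ) = f(x) + δ_X(x)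 + ⟨λ, Ax − b⟩. -/
import Mathlib

open scoped RealInnerProductSpace Pointwise

/-- The smallest singular value of a linear map between Euclidean spaces. -/
noncomputable def sigmaMin {n m : ℕ}
    (A : EuclideanSpace ℝ (Fin n) →L[ℝ] EuclideanSpace ℝ (Fin m)) : ℝ :=
  sInf {c : ℝ | ∃ x : EuclideanSpace ℝ (Fin n), ‖x‖ = 1 ∧ ‖A x‖ = c}

/-- The convex subdifferential. -/
def subdiff {n : ℕ} (f : EuclideanSpace ℝ (Fin n) → ℝ)
    (x : EuclideanSpace ℝ (Fin n)) : Set (EuclideanSpace ℝ (Fin n)) :=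
  {p | ∀ y, f x + ⟪p, y - x⟫ ≤ f y}

/-- The normal cone of `X` at `x` (empty if `x ∉ X`). -/
def normalCone {n : ℕ} (X : Set (EuclideanSpace ℝ (Fin n)))
    (x : EuclideanSpace ℝ (Fin n)) : Set (EuclideanSpace ℝ (Fin n)) :=
  {p | x ∈ X ∧ ∀ z ∈ X, ⟪p, z - x⟫ ≤ 0}

lemma sigmaMin_nonneg {n m : ℕ} (A : EuclideanSpace ℝ (Fin n) →L[ℝ] EuclideanSpace ℝ (Fin m)) :
    0 ≤ sigmaMin A :=
  Real.sInf_nonneg (by rintro c ⟨x, -, rfl⟩; exact norm_nonneg _)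

lemma sigmaMin_mul_le {n m : ℕ} (A : EuclideanSpace ℝ (Fin n) →L[ℝ] EuclideanSpace ℝ (Fin m))
    (d : EuclideanSpace ℝ (Fin n)) : sigmaMin A * ‖d‖ ≤ ‖A d‖ := by
  rcases eq_or_ne d 0 with rfl | hd
  · simp
  · have hnd : (0:ℝ) < ‖d‖ := norm_pos_iff.mpr hd
    have hmem : ‖A (‖d‖⁻¹ • d)‖ ∈ {c : ℝ | ∃ x : EuclideanSpace ℝ (Fin n), ‖x‖ = 1 ∧ ‖A x‖ = c} :=
      ⟨‖d‖⁻¹ • d, by simp [norm_smul, abs_of_pos (inv_pos.mpr hnd), inv_mul_cancel₀ hnd.ne'], rfl⟩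
    have hbdd : BddBelow {c : ℝ | ∃ x : EuclideanSpace ℝ (Fin n), ‖x‖ = 1 ∧ ‖A x‖ = c} :=
      ⟨0, by rintro c ⟨x, -, rfl⟩; exact norm_nonneg _⟩
    have h := csInf_le hbdd hmem
    have hA : ‖A (‖d‖⁻¹ • d)‖ = ‖d‖⁻¹ * ‖A d‖ := by
      rw [map_smul, norm_smul, Real.norm_eq_abs, abs_of_pos (inv_pos.mpr hnd)]
    rw [hA] at h
    calc sigmaMin A * ‖d‖ ≤ (‖d‖⁻¹ * ‖A d‖) * ‖d‖ :=
          mul_le_mul_of_nonneg_right h hnd.le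
      _ = ‖A d‖ := by field_simp

lemma norm_add_smul_sq {N : ℕ} (u w : EuclideanSpace ℝ (Fin N)) (t : ℝ) :
    ‖u + t • w‖ ^ 2 = ‖u‖ ^ 2 + 2 * t * ⟪u, w⟫ + t ^ 2 * ‖w‖ ^ 2 := by
  rw [@norm_add_sq_real, real_inner_smul_right, norm_smul, Real.norm_eq_abs,
    mul_pow, sq_abs]
  ring

lemma inner_sub_sub' {N : ℕ} (a b c : EuclideanSpace ℝ (Fin N)) :
    2 * ⟪a - b, b - c⟫ = ‖a - c‖ ^ 2 - ‖a - b‖ ^ 2 - ‖b - c‖ ^ 2 := by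
  have h : a - c = (a - b) + (b - c) := by abel
  rw [h, @norm_add_sq_real]; ring

lemma subdiff_decomp {n m : ℕ}
    (f : EuclideanSpace ℝ (Fin n) → ℝ) (hfcv : ConvexOn ℝ Set.univ f)
    (A : EuclideanSpace ℝ (Fin n) →L[ℝ] EuclideanSpace ℝ (Fin m))
    (b : EuclideanSpace ℝ (Fin m)) (β : ℝ) (hβ : 0 ≤ β)
    (fβ : EuclideanSpace ℝ (Fin n) → ℝ)
    (hfβ : ∀ z, fβ z = f z + β / 2 * ‖A z - b‖ ^ 2)
    (x' : EuclideanSpace ℝ (Fin n)) (p : EuclideanSpace ℝ (Fin n))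
    (hp : p ∈ subdiff fβ x') :
    p - β • (ContinuousLinearMap.adjoint A) (A x' - b) ∈ subdiff f x' := by
  intro y
  have hinner : ⟪p - β • (ContinuousLinearMap.adjoint A) (A x' - b), y - x'⟫
      = ⟪p, y - x'⟫ - β * ⟪A x' - b, A y - A x'⟫ := by
    rw [inner_sub_left, real_inner_smul_left, ContinuousLinearMap.adjoint_inner_left, map_sub]
  rw [hinner]
  set P : ℝ := ⟪p, y - x'⟫ with hP
  set Q : ℝ := ⟪A x' - b, A y - A x'⟫ with hQ
  set C : ℝ := β / 2 * ‖A y - A x'‖ ^ 2 with hC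
  have hC0 : 0 ≤ C := by positivity
  have key : ∀ t : ℝ, 0 < t → t ≤ 1 → f x' + (P - β * Q) ≤ f y + t * C := by
    intro t ht ht1
    have hsub := hp (x' + t • (y - x'))
    have hconv : f (x' + t • (y - x')) ≤ (1 - t) * f x' + t * f y := by
      have h := hfcv.2 (Set.mem_univ x') (Set.mem_univ y)
        (show (0:ℝ) ≤ 1 - t by linarith) ht.le (show (1:ℝ) - t + t = 1 by ring)
      have he : (1 - t) • x' + t • y = x' + t • (y - x') := by
        rw [sub_smul, one_smul, smul_sub]; abel
      rw [he] at h
      simpa using h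
    have hn : ‖A (x' + t • (y - x')) - b‖ ^ 2
        = ‖A x' - b‖ ^ 2 + 2 * t * Q + t ^ 2 * ‖A y - A x'‖ ^ 2 := by
      have he : A (x' + t • (y - x')) - b = (A x' - b) + t • (A y - A x') := by
        rw [map_add, map_smul, map_sub]; abel
      rw [he, norm_add_smul_sq]
    have hip : ⟪p, x' + t • (y - x') - x'⟫ = t * P := by
      rw [add_sub_cancel_left, real_inner_smul_right]
    rw [hfβ, hfβ, hip, hn] at hsub
    have h2 : t * (f x' + (P - β * Q) - (f y + t * C)) ≤ t * 0 := by nlinarith [hsub, hconv]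
    have h3 := le_of_mul_le_mul_left h2 ht
    linarith
  apply le_of_forall_pos_le_add
  intro ε hε
  have hden : (0:ℝ) < C + 1 := by linarith
  have ht0 : 0 < min 1 (ε / (C + 1)) := lt_min one_pos (div_pos hε hden)
  have h1 : min 1 (ε / (C + 1)) * C ≤ ε / (C + 1) * C :=
    mul_le_mul_of_nonneg_right (min_le_right _ _) hC0
  have h2 : ε / (C + 1) * C ≤ ε := by
    rw [div_mul_eq_mul_div, div_le_iff₀ hden]; nlinarith
  have h3 := key _ ht0 (min_le_left _ _)
  linarith

set_option maxHeartbeats 4000000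

/-- Theorem 3.1 (rate part): nonergodic convergence rates for the fully implicit scheme. -/
theorem implicit_scheme_rates {n m : ℕ}
    (X : Set (EuclideanSpace ℝ (Fin n)))
    (hXne : X.Nonempty) (hXcl : IsClosed X) (hXcv : Convex ℝ X)
    (f : EuclideanSpace ℝ (Fin n) → ℝ)
    (hfcv : ConvexOn ℝ Set.univ f)
    (A : EuclideanSpace ℝ (Fin n) →L[ℝ] EuclideanSpace ℝ (Fin m))
    (b : EuclideanSpace ℝ (Fin m))
    (μ β μβ : ℝ) (hμ : 0 ≤ μ) (hβ : 0 ≤ β)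
    (hμβ : μβ = μ + β * sigmaMin A ^ 2)
    (hsc : ∀ x ∈ X, ∀ y ∈ X, ∀ p ∈ subdiff f x,
      f x + ⟪p, y - x⟫ + μ / 2 * ‖y - x‖ ^ 2 ≤ f y)
    (fβ : EuclideanSpace ℝ (Fin n) → ℝ)
    (hfβ : ∀ z, fβ z = f z + β / 2 * ‖A z - b‖ ^ 2)
    (Lβ : EuclideanSpace ℝ (Fin n) → EuclideanSpace ℝ (Fin m) → ℝ)
    (hLβ : ∀ z w, Lβ z w = fβ z + ⟪w, A z - b⟫)
    (xs : EuclideanSpace ℝ (Fin n)) (ls : EuclideanSpace ℝ (Fin m))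
    (hxs : xs ∈ X) (hKKT1 : A xs = b)
    (hKKT2 : ∃ p ∈ subdiff f xs, ∃ q ∈ normalCone X xs,
      p + q + (ContinuousLinearMap.adjoint A) ls = 0)
    (θ γ α : ℕ → ℝ)
    (hα : ∀ k, 0 < α k) (hθ0 : θ 0 = 1) (hγ0 : 0 < γ 0)
    (hθ : ∀ k, θ (k + 1) = θ k / (1 + α k))
    (hγ : ∀ k, γ (k + 1) = (γ k + μβ * α k) / (1 + α k))
    (lam : ℕ → EuclideanSpace ℝ (Fin m))
    (x v : ℕ → EuclideanSpace ℝ (Fin n))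
    (hx0 : x 0 ∈ X)
    (hdual : ∀ k, (θ k / α k) • (lam (k + 1) - lam k) = A (v (k + 1)) - b)
    (hprim : ∀ k, (α k)⁻¹ • (x (k + 1) - x k) = v (k + 1) - x (k + 1))
    (hvup : ∀ k, ∃ ξ ∈ subdiff fβ (x (k + 1)) + normalCone X (x (k + 1)),
      (γ k / α k) • (v (k + 1) - v k) =
        μβ • (x (k + 1) - v (k + 1)) -
          (ξ + (ContinuousLinearMap.adjoint A) (lam (k + 1))))
    (Ef : ℕ → ℝ)
    (hEf : ∀ k, Ef k = Lβ (x k) ls - Lβ xs (lam k)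
      + γ k / 2 * ‖v k - xs‖ ^ 2 + θ k / 2 * ‖lam k - ls‖ ^ 2)
    (Lag : EuclideanSpace ℝ (Fin n) → EuclideanSpace ℝ (Fin m) → ℝ)
    (hLag : ∀ z w, Lag z w = f z + ⟪w, A z - b⟫)
    (R₀ : ℝ)
    (hR₀ : R₀ = Real.sqrt (2 * Ef 0) + ‖lam 0 - ls‖ + ‖A (x 0) - b‖) :
    ∀ k, θ k = (∏ i ∈ Finset.range k, (1 + α i)⁻¹) ∧
      ‖A (x k) - b‖ ≤ θ k * R₀ ∧
      (0 ≤ Lag (x k) ls - Lag xs (lam k) ∧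
        Lag (x k) ls - Lag xs (lam k) ≤ θ k * Ef 0) ∧
      |f (x k) - f xs| ≤ θ k * (Ef 0 + R₀ * ‖ls‖) := by
  have hμβ0 : 0 ≤ μβ := by
    have := sigmaMin_nonneg A
    rw [hμβ]; positivity
  have hAxs : A xs - b = 0 := by rw [hKKT1, sub_self]
  have hfβxs : fβ xs = f xs := by rw [hfβ, hAxs]; simp
  -- strong convexity inequality for fβ + normal cone on X
  have hSC : ∀ x' ∈ X, ∀ p ∈ subdiff fβ x',
      ∀ q, (∀ z ∈ X, ⟪q, z - x'⟫ ≤ 0) → ∀ y ∈ X,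
      fβ x' + ⟪p + q, y - x'⟫ + μβ / 2 * ‖y - x'‖ ^ 2 ≤ fβ y := by
    intro x' hx' p hp q hq y hy
    have hg := subdiff_decomp f hfcv A b β hβ fβ hfβ x' p hp
    have hf := hsc x' hx' y hy _ hg
    have hinner : ⟪p - β • (ContinuousLinearMap.adjoint A) (A x' - b), y - x'⟫
        = ⟪p, y - x'⟫ - β * ⟪A x' - b, A y - A x'⟫ := by
      rw [inner_sub_left, real_inner_smul_left, ContinuousLinearMap.adjoint_inner_left, map_sub]
    rw [hinner] at hf
    have hn : ‖A y - b‖ ^ 2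
        = ‖A x' - b‖ ^ 2 + 2 * 1 * ⟪A x' - b, A y - A x'⟫ + 1 ^ 2 * ‖A y - A x'‖ ^ 2 := by
      have he : A y - b = (A x' - b) + (1:ℝ) • (A y - A x') := by
        rw [one_smul]; abel
      rw [he, norm_add_smul_sq]
    have hσ : β * (sigmaMin A * ‖y - x'‖) ^ 2 ≤ β * ‖A y - A x'‖ ^ 2 := by
      apply mul_le_mul_of_nonneg_left _ hβ
      rw [← map_sub]
      exact pow_le_pow_left₀ (mul_nonneg (sigmaMin_nonneg A) (norm_nonneg _))
        (sigmaMin_mul_le A (y - x')) 2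
    have hq' := hq y hy
    have hiq : ⟪p + q, y - x'⟫ = ⟪p, y - x'⟫ + ⟪q, y - x'⟫ := inner_add_left _ _ _
    rw [hfβ y, hfβ x', hiq]
    have hexp : (sigmaMin A * ‖y - x'‖) ^ 2 = sigmaMin A ^ 2 * ‖y - x'‖ ^ 2 := by ring
    rw [hexp] at hσ
    rw [hμβ]
    nlinarith [hf, hn, hσ, hq']
  -- KKT data
  obtain ⟨ps, hps, qs, hqs, hpq⟩ := hKKT2
  have hpsβ : ps ∈ subdiff fβ xs := by
    intro y
    have h1 := hps y
    have h2 : f y ≤ fβ y := by rw [hfβ]; nlinarith [sq_nonneg ‖A y - b‖, norm_nonneg (A y - b)]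
    rw [hfβxs]; linarith
  -- the merit function
  obtain ⟨φ, hφdef⟩ : ∃ g : EuclideanSpace ℝ (Fin n) → ℝ,
      g = fun z => fβ z + ⟪ls, A z - b⟫ - f xs := ⟨_, rfl⟩
  have hφ : ∀ z ∈ X, μβ / 2 * ‖z - xs‖ ^ 2 ≤ φ z := by
    intro z hz
    have h := hSC xs hxs ps hpsβ qs hqs.2 z hz
    have hiq : ⟪ps + qs, z - xs⟫ = -⟪ls, A z - b⟫ := by
      have h0 : ps + qs = -((ContinuousLinearMap.adjoint A) ls) :=
        eq_neg_of_add_eq_zero_left hpq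
      have hAz : A (z - xs) = A z - b := by rw [map_sub, hKKT1]
      rw [h0, inner_neg_left, ContinuousLinearMap.adjoint_inner_left, hAz]
    rw [hiq, hfβxs] at h
    simp only [hφdef]
    linarith
  have hφ0 : ∀ z ∈ X, 0 ≤ φ z := fun z hz =>
    le_trans (by positivity) (hφ z hz)
  -- energy in terms of φ
  have hEφ : ∀ k, Ef k = φ (x k) + γ k / 2 * ‖v k - xs‖ ^ 2 + θ k / 2 * ‖lam k - ls‖ ^ 2 := by
    intro k
    rw [hEf, hLβ, hLβ, hAxs]
    simp only [hφdef, inner_zero_right, hfβxs]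
    ring
  -- iterates stay in X
  have hXk : ∀ k, x k ∈ X := by
    intro k
    cases k with
    | zero => exact hx0
    | succ k =>
      obtain ⟨ξ, hξ, -⟩ := hvup k
      rcases hξ with ⟨p', hp', q', hq', rfl⟩
      exact hq'.1
  have h1α : ∀ k, (0:ℝ) < 1 + α k := fun k => by linarith [hα k]
  have hθpos : ∀ k, 0 < θ k := by
    intro k; induction k with
    | zero => rw [hθ0]; norm_num
    | succ k ih => rw [hθ]; exact div_pos ih (h1α k)
  have hγpos : ∀ k, 0 < γ k := by
    intro k; induction k with
    | zero => exact hγ0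
    | succ k ih =>
      rw [hγ]; apply div_pos _ (h1α k)
      have := mul_nonneg hμβ0 (hα k).le
      linarith
  -- the key one-step Lyapunov inequality
  have hkey : ∀ k, (1 + α k) * Ef (k + 1) ≤ Ef k := by
    intro k
    obtain ⟨ξ, hξ, hξeq⟩ := hvup k
    rcases hξ with ⟨p', hp', q', hq', rfl⟩
    have hx1X : x (k + 1) ∈ X := hq'.1
    have ha0 : (α k) ≠ 0 := (hα k).ne'
    -- primal step identity
    have e0 : x (k + 1) - x k = (α k) • (v (k + 1) - x (k + 1)) := by
      have h2 := hprim k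
      rw [inv_smul_eq_iff₀ ha0] at h2
      exact h2
    have hd1 : x k - x (k + 1)
        = (-(α k)) • (v (k + 1) - xs) - (α k) • (xs - x (k + 1)) := by
      have e1 : x k - x (k + 1) = -((α k) • (v (k + 1) - x (k + 1))) := by
        rw [← e0]; abel
      rw [e1]; module
    -- gradient decomposition
    have hG : ∀ d : EuclideanSpace ℝ (Fin n), ⟪p' + q', d⟫ + ⟪ls, A d⟫
        = μβ * ⟪x (k + 1) - v (k + 1), d⟫ - (γ k / α k) * ⟪v (k + 1) - v k, d⟫
          + ⟪ls - lam (k + 1), A d⟫ := by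
      intro d
      have hv : p' + q' = μβ • (x (k + 1) - v (k + 1)) - (γ k / α k) • (v (k + 1) - v k)
          - (ContinuousLinearMap.adjoint A) (lam (k + 1)) := by
        linear_combination (norm := module) hξeq
      rw [hv]
      simp only [inner_sub_left, real_inner_smul_left, ContinuousLinearMap.adjoint_inner_left]
      ring
    have hGa : ∀ d : EuclideanSpace ℝ (Fin n),
        α k * (⟪p' + q', d⟫ + ⟪ls, A d⟫)
        = α k * μβ * ⟪x (k + 1) - v (k + 1), d⟫ - γ k * ⟪v (k + 1) - v k, d⟫
          + α k * ⟪ls - lam (k + 1), A d⟫ := by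
      intro d
      have h := hG d
      have ha' : α k * (γ k / α k) = γ k := by field_simp
      linear_combination α k * h - (⟪v (k + 1) - v k, d⟫ : ℝ) * ha'
    -- dual step identity
    have hAv : (α k) • (A (v (k + 1)) - b) = θ k • (lam (k + 1) - lam k) := by
      rw [← hdual k, smul_smul]
      congr 1
      field_simp
    have g2 : α k * ⟪ls - lam (k + 1), A (v (k + 1) - xs)⟫
        = θ k * ⟪ls - lam (k + 1), lam (k + 1) - lam k⟫ := by
      have hAvx : A (v (k + 1) - xs) = A (v (k + 1)) - b := by rw [map_sub, hKKT1]
      rw [hAvx, ← real_inner_smul_right, hAv, real_inner_smul_right]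
    -- the two strong-convexity inequalities in φ form
    have hlsd : ∀ y, (⟪ls, A y - b⟫ : ℝ) - ⟪ls, A (x (k + 1)) - b⟫ = ⟪ls, A (y - x (k + 1))⟫ := by
      intro y
      simp only [map_sub, inner_sub_right]
      ring
    have S1 : φ (x (k + 1)) + (⟪p' + q', x k - x (k + 1)⟫ + ⟪ls, A (x k - x (k + 1))⟫)
        + μβ / 2 * ‖x k - x (k + 1)‖ ^ 2 ≤ φ (x k) := by
      have hT := hSC (x (k + 1)) hx1X p' hp' q' hq'.2 (x k) (hXk k)
      have hl := hlsd (x k)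
      simp only [hφdef]
      linarith [hT, hl]
    have S2 : φ (x (k + 1)) + (⟪p' + q', xs - x (k + 1)⟫ + ⟪ls, A (xs - x (k + 1))⟫)
        + μβ / 2 * ‖xs - x (k + 1)‖ ^ 2 ≤ 0 := by
      have hT := hSC (x (k + 1)) hx1X p' hp' q' hq'.2 xs hxs
      have hl := hlsd xs
      rw [hAxs] at hl
      simp only [inner_zero_right] at hl
      rw [hfβxs] at hT
      simp only [hφdef]
      linarith [hT, hl]
    have j1 : (⟪p' + q', x k - x (k + 1)⟫ : ℝ)
        = -(α k * ⟪p' + q', v (k + 1) - xs⟫) - α k * ⟪p' + q', xs - x (k + 1)⟫ := by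
      rw [hd1, inner_sub_right, real_inner_smul_right, real_inner_smul_right]
      ring
    have j2 : (⟪ls, A (x k - x (k + 1))⟫ : ℝ)
        = -(α k * ⟪ls, A (v (k + 1) - xs)⟫) - α k * ⟪ls, A (xs - x (k + 1))⟫ := by
      rw [hd1, map_sub, map_smul, map_smul, inner_sub_right,
        real_inner_smul_right, real_inner_smul_right]
      ring
    have key1 : (1 + α k) * φ (x (k + 1)) ≤ φ (x k)
        + α k * (⟪p' + q', v (k + 1) - xs⟫ + ⟪ls, A (v (k + 1) - xs)⟫)
        - α k * μβ / 2 * ‖xs - x (k + 1)‖ ^ 2 := by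
      have S2a := mul_le_mul_of_nonneg_left S2 (hα k).le
      have hnn : 0 ≤ μβ / 2 * ‖x k - x (k + 1)‖ ^ 2 := by positivity
      linarith [S1, S2a, j1, j2, hnn]
    -- polarization identities
    have Q1 : α k * μβ * ⟪x (k + 1) - v (k + 1), v (k + 1) - xs⟫
        = α k * μβ / 2 * (‖x (k + 1) - xs‖ ^ 2 - ‖x (k + 1) - v (k + 1)‖ ^ 2
            - ‖v (k + 1) - xs‖ ^ 2) := by
      linear_combination (α k * μβ / 2) * inner_sub_sub' (x (k + 1)) (v (k + 1)) xs
    have Q2 : γ k * ⟪v (k + 1) - v k, v (k + 1) - xs⟫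
        = γ k / 2 * (‖v (k + 1) - xs‖ ^ 2 + ‖v k - v (k + 1)‖ ^ 2 - ‖v k - xs‖ ^ 2) := by
      have hbr : v (k + 1) - v k = -(v k - v (k + 1)) := by abel
      rw [hbr, inner_neg_left]
      linear_combination (-(γ k) / 2) * inner_sub_sub' (v k) (v (k + 1)) xs
    have Q3 : θ k * ⟪ls - lam (k + 1), lam (k + 1) - lam k⟫
        = θ k / 2 * (‖ls - lam k‖ ^ 2 - ‖ls - lam (k + 1)‖ ^ 2
            - ‖lam (k + 1) - lam k‖ ^ 2) := by
      linear_combination (θ k / 2) * inner_sub_sub' ls (lam (k + 1)) (lam k)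
    have Fxa : α k * μβ / 2 * ‖xs - x (k + 1)‖ ^ 2
        = α k * μβ / 2 * ‖x (k + 1) - xs‖ ^ 2 := by rw [norm_sub_rev]
    have Fl1 : θ k / 2 * ‖lam (k + 1) - ls‖ ^ 2 = θ k / 2 * ‖ls - lam (k + 1)‖ ^ 2 := by
      rw [norm_sub_rev]
    have Fl0 : θ k / 2 * ‖lam k - ls‖ ^ 2 = θ k / 2 * ‖ls - lam k‖ ^ 2 := by
      rw [norm_sub_rev]
    have h1ane : (1 + α k) ≠ 0 := (h1α k).ne'
    have hθk : (1 + α k) * θ (k + 1) = θ k := by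
      rw [hθ]
      field_simp
    have hγk : (1 + α k) * γ (k + 1) = γ k + μβ * α k := by
      rw [hγ]
      field_simp
    have hθkL : (1 + α k) * (θ (k + 1) / 2 * ‖lam (k + 1) - ls‖ ^ 2)
        = θ k / 2 * ‖lam (k + 1) - ls‖ ^ 2 := by
      linear_combination (‖lam (k + 1) - ls‖ ^ 2 / 2) * hθk
    have hγkV : (1 + α k) * (γ (k + 1) / 2 * ‖v (k + 1) - xs‖ ^ 2)
        = (γ k + μβ * α k) / 2 * ‖v (k + 1) - xs‖ ^ 2 := by
      linear_combination (‖v (k + 1) - xs‖ ^ 2 / 2) * hγk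
    have nn1 : 0 ≤ α k * μβ / 2 * ‖x (k + 1) - v (k + 1)‖ ^ 2 := by
      have := (hα k).le
      positivity
    have nn2 : 0 ≤ γ k / 2 * ‖v k - v (k + 1)‖ ^ 2 :=
      mul_nonneg (by linarith [hγpos k]) (sq_nonneg _)
    have nn3 : 0 ≤ θ k / 2 * ‖lam (k + 1) - lam k‖ ^ 2 :=
      mul_nonneg (by linarith [hθpos k]) (sq_nonneg _)
    rw [hEφ k, hEφ (k + 1)]
    linarith [key1, hGa (v (k + 1) - xs), g2, Q1, Q2, Q3, Fxa, Fl1, Fl0, hθkL, hγkV,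
      nn1, nn2, nn3]
  -- product formula
  have hθprod : ∀ k, θ k = ∏ i ∈ Finset.range k, (1 + α i)⁻¹ := by
    intro k
    induction k with
    | zero => simpa using hθ0
    | succ k ih => rw [Finset.prod_range_succ, ← ih, hθ, div_eq_mul_inv]
  -- energy decay
  have hEle : ∀ k, Ef k ≤ θ k * Ef 0 := by
    intro k
    induction k with
    | zero => rw [hθ0, one_mul]
    | succ k ih =>
      have h := hkey k
      have h2 : Ef (k + 1) ≤ Ef k / (1 + α k) := by
        rw [le_div_iff₀ (h1α k)]
        linarith
      have h3 : Ef k / (1 + α k) ≤ θ k * Ef 0 / (1 + α k) := by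
        have := h1α k
        gcongr
      have h4 : θ (k + 1) * Ef 0 = θ k * Ef 0 / (1 + α k) := by rw [hθ]; ring
      linarith
  have hVnn : ∀ k, 0 ≤ γ k / 2 * ‖v k - xs‖ ^ 2 := fun k =>
    mul_nonneg (by linarith [hγpos k]) (sq_nonneg _)
  have hLnn : ∀ k, 0 ≤ θ k / 2 * ‖lam k - ls‖ ^ 2 := fun k =>
    mul_nonneg (by linarith [hθpos k]) (sq_nonneg _)
  have hEnn : ∀ k, 0 ≤ Ef k := by
    intro k
    rw [hEφ]
    linarith [hφ0 (x k) (hXk k), hVnn k, hLnn k]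
  have hE0 : 0 ≤ Ef 0 := hEnn 0
  have hφle : ∀ k, φ (x k) ≤ Ef k := by
    intro k
    rw [hEφ]
    linarith [hVnn k, hLnn k]
  have hlamle : ∀ k, ‖lam k - ls‖ ≤ Real.sqrt (2 * Ef 0) := by
    intro k
    have h1 : θ k / 2 * ‖lam k - ls‖ ^ 2 ≤ Ef k := by
      rw [hEφ]
      linarith [hφ0 (x k) (hXk k), hVnn k]
    have h2 : θ k / 2 * ‖lam k - ls‖ ^ 2 ≤ θ k * Ef 0 := le_trans h1 (hEle k)
    have h3 : ‖lam k - ls‖ ^ 2 ≤ 2 * Ef 0 := by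
      by_contra hcon
      push_neg at hcon
      nlinarith [mul_pos (hθpos k) (sub_pos.mpr hcon)]
    calc ‖lam k - ls‖ = Real.sqrt (‖lam k - ls‖ ^ 2) := (Real.sqrt_sq (norm_nonneg _)).symm
      _ ≤ Real.sqrt (2 * Ef 0) := Real.sqrt_le_sqrt h3
  have hR0nn : 0 ≤ R₀ := by
    rw [hR₀]
    positivity
  -- feasibility identity
  have hfeas : ∀ k, A (x k) - b = θ k • (A (x 0) - b + (lam k - lam 0)) := by
    intro k
    induction k with
    | zero =>
      rw [hθ0, sub_self, add_zero, one_smul]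
    | succ k ih =>
      have ha0 : (α k) ≠ 0 := (hα k).ne'
      have e0 : x (k + 1) - x k = (α k) • (v (k + 1) - x (k + 1)) := by
        have h2 := hprim k
        rw [inv_smul_eq_iff₀ ha0] at h2
        exact h2
      have hAv : (α k) • (A (v (k + 1)) - b) = θ k • (lam (k + 1) - lam k) := by
        rw [← hdual k, smul_smul]
        congr 1
        field_simp
      have hstep : (1 + α k) • (A (x (k + 1)) - b)
          = (A (x k) - b) + (α k) • (A (v (k + 1)) - b) := by
        have hA : A (x (k + 1)) - A (x k) = α k • (A (v (k + 1)) - A (x (k + 1))) := by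
          rw [← map_sub, e0, map_smul, map_sub]
        linear_combination (norm := module) hA
      have hθk1 : θ k = (1 + α k) * θ (k + 1) := by
        have h1ane : (1 + α k) ≠ 0 := (h1α k).ne'
        rw [hθ]
        field_simp
      have hcomb : (1 + α k) • (A (x (k + 1)) - b)
          = (1 + α k) • (θ (k + 1) • (A (x 0) - b + (lam (k + 1) - lam 0))) := by
        rw [hstep, ih, hAv, smul_smul, ← hθk1]
        module
      exact smul_right_injective _ (h1α k).ne' hcomb
  have hfeasnorm : ∀ k, ‖A (x k) - b‖ ≤ θ k * R₀ := by
    intro k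
    rw [hfeas k, norm_smul, Real.norm_eq_abs, abs_of_pos (hθpos k)]
    apply mul_le_mul_of_nonneg_left _ (hθpos k).le
    have hsplit : lam k - lam 0 = (lam k - ls) + (ls - lam 0) := by abel
    have htri1 : ‖A (x 0) - b + (lam k - lam 0)‖ ≤ ‖A (x 0) - b‖ + ‖lam k - lam 0‖ :=
      norm_add_le _ _
    have htri2 : ‖lam k - lam 0‖ ≤ ‖lam k - ls‖ + ‖ls - lam 0‖ := by
      rw [hsplit]
      exact norm_add_le _ _
    have hrev : ‖ls - lam 0‖ = ‖lam 0 - ls‖ := norm_sub_rev _ _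
    rw [hR₀]
    linarith [hlamle k]
  -- Lagrangian computations
  have hLagxs : ∀ k, Lag xs (lam k) = f xs := by
    intro k
    rw [hLag, hAxs, inner_zero_right, add_zero]
  have hgap_nn : ∀ k, 0 ≤ f (x k) + ⟪ls, A (x k) - b⟫ - f xs := by
    intro k
    have h1 := hps (x k)
    have h2 := hqs.2 (x k) (hXk k)
    have h3 : (⟪ps, x k - xs⟫ : ℝ) + ⟪qs, x k - xs⟫ + ⟪ls, A (x k) - b⟫ = 0 := by
      have h4 : (⟪ps + qs + (ContinuousLinearMap.adjoint A) ls, x k - xs⟫ : ℝ) = 0 := by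
        rw [hpq]
        exact inner_zero_left _
      rw [inner_add_left, inner_add_left, ContinuousLinearMap.adjoint_inner_left] at h4
      have h5 : A (x k - xs) = A (x k) - b := by rw [map_sub, hKKT1]
      rw [h5] at h4
      exact h4
    linarith
  have hgap_ub : ∀ k, f (x k) + ⟪ls, A (x k) - b⟫ - f xs ≤ θ k * Ef 0 := by
    intro k
    have h1 : f (x k) + ⟪ls, A (x k) - b⟫ - f xs ≤ φ (x k) := by
      simp only [hφdef]
      rw [hfβ]
      have h0 : 0 ≤ β / 2 * ‖A (x k) - b‖ ^ 2 := by positivity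
      linarith
    linarith [hφle k, hEle k]
  -- conclusion
  intro k
  have hib : |(⟪ls, A (x k) - b⟫ : ℝ)| ≤ ‖ls‖ * (θ k * R₀) :=
    le_trans (abs_real_inner_le_norm _ _)
      (mul_le_mul_of_nonneg_left (hfeasnorm k) (norm_nonneg _))
  obtain ⟨hibl, hibu⟩ := abs_le.mp hib
  have hθE : 0 ≤ θ k * Ef 0 := mul_nonneg (hθpos k).le hE0
  refine ⟨hθprod k, hfeasnorm k, ⟨?_, ?_⟩, ?_⟩
  · rw [hLag, hLagxs k]
    linarith [hgap_nn k]
  · rw [hLag, hLagxs k]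
    linarith [hgap_ub k]
  · rw [abs_le]
    constructor
    · linarith [hgap_nn k]
    · linarith [hgap_ub k]
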